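/- Let H be a k-uniform hypergraph with m edges, no isolated vertices, minimum degree δ, and independence number α. Then λ_1(H) ≥ km/(km - αδ). -/

import Mathlib

open Finset

variable {n : ℕ}

def hdeg (E : Finset (Finset (Fin n))) (v : Fin n) : ℕ :=
  (E.filter fun e => v ∈ e).card

def codeg (E : Finset (Finset (Fin n))) (u v : Fin n) : ℕ :=
  (E.filter fun e => u ∈ e ∧ v ∈ e).card

noncomputable def adjMat (E : Finset (Finset (Fin n))) : Matrix (Fin n) (Fin n) ℝ :=
  fun u v => if u = v then 0
    else ∑ e ∈ E.filter (fun e => u ∈ e ∧ v ∈ e), (1 : ℝ) / ((e.card : ℝ) - 1)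

noncomputable def lapMat (E : Finset (Finset (Fin n))) : Matrix (Fin n) (Fin n) ℝ :=
  Matrix.diagonal (fun v => (hdeg E v : ℝ)) - adjMat E

noncomputable def normLap (E : Finset (Finset (Fin n))) : Matrix (Fin n) (Fin n) ℝ :=
  Matrix.diagonal (fun v => (hdeg E v : ℝ) ^ (-(1/2) : ℝ)) * lapMat E *
    Matrix.diagonal (fun v => (hdeg E v : ℝ) ^ (-(1/2) : ℝ))

noncomputable def eigsAsc (M : Matrix (Fin n) (Fin n) ℝ) : Fin n → ℝ :=
  if h : M.IsHermitian then (h.eigenvalues ∘ Tuple.sort h.eigenvalues) else 0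

noncomputable def lamMax {n : ℕ} (M : Matrix (Fin n) (Fin n) ℝ) : ℝ :=
  ⨆ i, eigsAsc M i

noncomputable def volR {n : ℕ} (E : Finset (Finset (Fin n))) (S : Finset (Fin n)) : ℝ :=
  ∑ v ∈ S, (hdeg E v : ℝ)

noncomputable def bndR {n : ℕ} (E : Finset (Finset (Fin n))) (S : Finset (Fin n)) : ℝ :=
  ∑ u ∈ S, ∑ v ∈ Sᶜ, (codeg E u v : ℝ)

open Matrix

lemma eig_le_lamMax {n : ℕ} [NeZero n] {M : Matrix (Fin n) (Fin n) ℝ} (hM : M.IsHermitian)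
    (i : Fin n) : hM.eigenvalues i ≤ lamMax M := by
  have h1 : lamMax M = ⨆ j, hM.eigenvalues j := by
    unfold lamMax eigsAsc
    rw [dif_pos hM]
    exact (Tuple.sort hM.eigenvalues).surjective.iSup_comp _
  rw [h1]
  exact le_ciSup (Set.Finite.bddAbove (Set.finite_range _)) i

lemma rayleigh {n : ℕ} [NeZero n] {M : Matrix (Fin n) (Fin n) ℝ} (hM : M.IsHermitian)
    (x : Fin n → ℝ) : x ⬝ᵥ M *ᵥ x ≤ lamMax M * (x ⬝ᵥ x) := by
  have hspec := hM.spectral_theorem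
  rw [RCLike.ofReal_real_eq_id] at hspec
  simp only [Function.comp_id, Function.id_comp] at hspec
  set U : Matrix (Fin n) (Fin n) ℝ := (hM.eigenvectorUnitary : Matrix (Fin n) (Fin n) ℝ) with hU
  have hUs : U * star U = 1 := (Matrix.mem_unitaryGroup_iff).mp hM.eigenvectorUnitary.2
  set lam : Fin n → ℝ := hM.eigenvalues with hlam
  set y : Fin n → ℝ := (star U) *ᵥ x with hy
  have hxUz : ∀ z : Fin n → ℝ, x ⬝ᵥ U *ᵥ z = y ⬝ᵥ z := by
    intro z
    rw [dotProduct_mulVec, hy]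
    congr 1
    ext j
    simp [vecMul, mulVec, dotProduct, Matrix.star_apply, mul_comm]
  have key : x ⬝ᵥ M *ᵥ x = ∑ i, lam i * (y i)^2 := by
    conv_lhs => rw [hspec, Unitary.conjStarAlgAut_apply]
    rw [← mulVec_mulVec, ← mulVec_mulVec, hxUz]
    simp [dotProduct, mulVec_diagonal]
    apply Finset.sum_congr rfl
    intro i _
    ring
  have hyy : y ⬝ᵥ y = x ⬝ᵥ x := by
    rw [hy, dotProduct_mulVec]
    have h2 : (star U *ᵥ x) ᵥ* star U = U *ᵥ (star U *ᵥ x) := by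
      ext i
      simp [vecMul, mulVec, dotProduct, Matrix.star_apply, mul_comm]
    rw [h2, mulVec_mulVec, hUs, one_mulVec]
  have hbound : ∑ i, lam i * (y i)^2 ≤ lamMax M * ∑ i, (y i)^2 := by
    rw [Finset.mul_sum]
    apply Finset.sum_le_sum
    intro i _
    have := eig_le_lamMax hM i
    nlinarith [sq_nonneg (y i)]
  have hyy2 : y ⬝ᵥ y = ∑ i, (y i)^2 := by simp [dotProduct, sq]
  rw [key, ← hyy, hyy2]
  exact hbound

lemma adj_symm (E : Finset (Finset (Fin n))) (u v : Fin n) :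
    adjMat E u v = adjMat E v u := by
  unfold adjMat
  by_cases h : u = v
  · subst h; simp
  · rw [if_neg h, if_neg (Ne.symm h)]
    apply Finset.sum_congr _ (fun _ _ => rfl)
    apply Finset.filter_congr
    intro e _
    simp [and_comm]

lemma adj_rowsum {k : ℕ} (hk : 2 ≤ k) (E : Finset (Finset (Fin n)))
    (hunif : ∀ e ∈ E, e.card = k) (u : Fin n) :
    ∑ v, adjMat E u v = (hdeg E u : ℝ) := by
  have hk1 : ((k : ℝ) - 1) ≠ 0 := by
    have : (2:ℝ) ≤ (k:ℝ) := by exact_mod_cast hk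
    linarith
  have step1 : ∀ v, adjMat E u v
      = ∑ e ∈ E, if u ∈ e ∧ v ∈ e.erase u then (1:ℝ)/((e.card:ℝ)-1) else 0 := by
    intro v
    unfold adjMat
    by_cases h : u = v
    · subst h
      simp [Finset.mem_erase]
    · rw [if_neg h, Finset.sum_filter]
      apply Finset.sum_congr rfl
      intro e _
      apply if_congr _ rfl rfl
      simp [Finset.mem_erase, Ne.symm h]
  rw [Finset.sum_congr rfl (fun v _ => step1 v), Finset.sum_comm]
  have step2 : ∀ e ∈ E, (∑ v, if u ∈ e ∧ v ∈ e.erase u then (1:ℝ)/((e.card:ℝ)-1) else 0)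
      = if u ∈ e then (1:ℝ) else 0 := by
    intro e he
    by_cases hu : u ∈ e
    · simp only [hu, true_and, if_true]
      rw [Finset.sum_ite_mem, Finset.univ_inter, Finset.sum_const,
        Finset.card_erase_of_mem hu, hunif e he, nsmul_eq_mul,
        Nat.cast_sub (by omega), Nat.cast_one]
      field_simp
    · simp [hu]
  rw [Finset.sum_congr rfl step2]
  unfold hdeg
  rw [Finset.card_filter]
  push_cast
  rfl

lemma normLap_herm (E : Finset (Finset (Fin n))) : (normLap E).IsHermitian := by
  have hA : (adjMat E).IsHermitian := by
    rw [Matrix.IsHermitian]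
    ext u v
    simp [Matrix.conjTranspose_apply, adj_symm E u v]
  have hD : (Matrix.diagonal (fun v => (hdeg E v : ℝ))).IsHermitian :=
    Matrix.isHermitian_diagonal _
  have hL : (lapMat E).IsHermitian := hD.sub hA
  have hDm : (Matrix.diagonal (fun v => (hdeg E v : ℝ) ^ (-(1/2) : ℝ))).IsHermitian :=
    Matrix.isHermitian_diagonal _
  unfold normLap
  rw [Matrix.IsHermitian, Matrix.conjTranspose_mul, Matrix.conjTranspose_mul,
    hDm.eq, hL.eq, mul_assoc]

set_option maxHeartbeats 1000000 in
theorem stmt9 (n k m α δ : ℕ) (hk : 2 ≤ k) (E : Finset (Finset (Fin n)))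
    (hunif : ∀ e ∈ E, e.card = k) (hm : E.card = m) (hiso : ∀ v : Fin n, 0 < hdeg E v)
    (hδ : IsLeast (Set.range (hdeg E)) δ)
    (hα : IsGreatest {c : ℕ | ∃ S : Finset (Fin n), S.card = c ∧
        ∀ u ∈ S, ∀ v ∈ S, u ≠ v → codeg E u v = 0} α) :
    (k : ℝ) * (m : ℝ) / ((k : ℝ) * (m : ℝ) - (α : ℝ) * (δ : ℝ)) ≤ lamMax (normLap E) := by
  rcases Nat.eq_zero_or_pos n with hn0 | hn
  · subst hn0
    have hE : E = ∅ := by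
      ext e
      simp only [Finset.notMem_empty, iff_false]
      intro he
      have h1 := hunif e he
      have h2 : e = ∅ := Finset.eq_empty_of_isEmpty e
      rw [h2] at h1
      simp at h1
      omega
    have hm0 : m = 0 := by rw [← hm, hE]; rfl
    subst hm0
    have hlz : lamMax (normLap E) = 0 := by
      unfold lamMax
      exact Real.iSup_of_isEmpty _
    rw [hlz]
    simp
  · haveI : NeZero n := ⟨hn.ne'⟩
    obtain ⟨S, hScard, hSind⟩ := hα.1
    have hd1 : ∀ v : Fin n, (1:ℝ) ≤ (hdeg E v : ℝ) := fun v => by exact_mod_cast hiso v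
    set σ : ℝ := ∑ v ∈ S, (hdeg E v : ℝ) with hσdef
    set τ : ℝ := ∑ v ∈ Sᶜ, (hdeg E v : ℝ) with hτdef
    -- total degree sum
    have hdegsum : ∑ v : Fin n, hdeg E v = k * m := by
      unfold hdeg
      rw [Finset.sum_congr rfl (fun v _ => Finset.card_filter _ _), Finset.sum_comm]
      have step : ∀ e ∈ E, (∑ v : Fin n, if v ∈ e then 1 else 0) = k := by
        intro e he
        rw [Finset.sum_ite_mem, Finset.univ_inter, Finset.sum_const, smul_eq_mul, mul_one,
          hunif e he]
      rw [Finset.sum_congr rfl step, Finset.sum_const, smul_eq_mul, hm, mul_comm]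
    have hV : σ + τ = (k:ℝ) * (m:ℝ) := by
      rw [hσdef, hτdef, Finset.sum_add_sum_compl]
      have : ∑ v : Fin n, (hdeg E v : ℝ) = ((∑ v : Fin n, hdeg E v : ℕ) : ℝ) := by push_cast; rfl
      rw [this, hdegsum]; push_cast; ring
    -- independence block
    have hadjSS : ∀ u ∈ S, ∀ v ∈ S, adjMat E u v = 0 := by
      intro u hu v hv
      unfold adjMat
      by_cases h : u = v
      · simp [h]
      · rw [if_neg h]
        have h0 : E.filter (fun e => u ∈ e ∧ v ∈ e) = ∅ :=
          Finset.card_eq_zero.mp (hSind u hu v hv h)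
        rw [h0, Finset.sum_empty]
    have hASS : ∑ u ∈ S, ∑ v ∈ S, adjMat E u v = 0 :=
      Finset.sum_eq_zero fun u hu => Finset.sum_eq_zero fun v hv => hadjSS u hu v hv
    have hrow : ∀ u, ∑ v ∈ S, adjMat E u v + ∑ v ∈ Sᶜ, adjMat E u v = (hdeg E u : ℝ) := by
      intro u
      rw [Finset.sum_add_sum_compl]
      exact adj_rowsum hk E hunif u
    have hASSc : ∑ u ∈ S, ∑ v ∈ Sᶜ, adjMat E u v = σ := by
      have h1 : ∑ u ∈ S, (∑ v ∈ S, adjMat E u v + ∑ v ∈ Sᶜ, adjMat E u v) = σ :=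
        Finset.sum_congr rfl fun u _ => hrow u
      rw [Finset.sum_add_distrib, hASS, zero_add] at h1
      exact h1
    have hAScS : ∑ u ∈ Sᶜ, ∑ v ∈ S, adjMat E u v = σ := by
      rw [show ∑ u ∈ Sᶜ, ∑ v ∈ S, adjMat E u v = ∑ v ∈ S, ∑ u ∈ Sᶜ, adjMat E u v from Finset.sum_comm]
      have h2 : ∀ v ∈ S, ∑ u ∈ Sᶜ, adjMat E u v = ∑ u ∈ Sᶜ, adjMat E v u :=
        fun v _ => Finset.sum_congr rfl fun u _ => adj_symm E u v
      rw [Finset.sum_congr rfl h2]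
      exact hASSc
    have hAScSc : ∑ u ∈ Sᶜ, ∑ v ∈ Sᶜ, adjMat E u v = τ - σ := by
      have h1 : ∑ u ∈ Sᶜ, (∑ v ∈ S, adjMat E u v + ∑ v ∈ Sᶜ, adjMat E u v) = τ :=
        Finset.sum_congr rfl fun u _ => hrow u
      rw [Finset.sum_add_distrib, hAScS] at h1
      linarith
    -- test vectors
    set f : Fin n → ℝ := fun v => if v ∈ S then τ else -σ with hf
    set x : Fin n → ℝ := fun v => Real.sqrt (hdeg E v : ℝ) * f v with hx
    have hT1 : ∑ v : Fin n, (hdeg E v : ℝ) * (f v)^2 = σ * τ^2 + τ * σ^2 := by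
      rw [← Finset.sum_add_sum_compl S]
      congr 1
      · have e1 : ∀ v ∈ S, (hdeg E v : ℝ) * (f v)^2 = (hdeg E v : ℝ) * τ^2 :=
          fun v hv => by simp only [hf, if_pos hv]
        rw [Finset.sum_congr rfl e1, ← Finset.sum_mul]
      · have e1 : ∀ v ∈ Sᶜ, (hdeg E v : ℝ) * (f v)^2 = (hdeg E v : ℝ) * σ^2 :=
          fun v hv => by simp only [hf, if_neg (Finset.mem_compl.mp hv)]; ring
        rw [Finset.sum_congr rfl e1, ← Finset.sum_mul]
    have blk : ∀ (X : Finset (Fin n)) (cu : ℝ), (∀ u ∈ X, f u = cu) →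
        ∑ u ∈ X, ∑ v : Fin n, f u * (adjMat E u v * f v)
          = cu * τ * (∑ u ∈ X, ∑ v ∈ S, adjMat E u v)
            + cu * (-σ) * (∑ u ∈ X, ∑ v ∈ Sᶜ, adjMat E u v) := by
      intro X cu hcu
      have inner : ∀ u ∈ X, ∑ v : Fin n, f u * (adjMat E u v * f v)
          = cu * τ * (∑ v ∈ S, adjMat E u v) + cu * (-σ) * (∑ v ∈ Sᶜ, adjMat E u v) := by
        intro u hu
        rw [← Finset.sum_add_sum_compl S (fun v => f u * (adjMat E u v * f v))]
        congr 1
        · calc ∑ v ∈ S, f u * (adjMat E u v * f v)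
              = ∑ v ∈ S, (cu * τ) * adjMat E u v :=
                Finset.sum_congr rfl (fun v hv => by
                  rw [hcu u hu]; simp only [hf, if_pos hv]; ring)
            _ = cu * τ * ∑ v ∈ S, adjMat E u v := (Finset.mul_sum _ _ _).symm
        · calc ∑ v ∈ Sᶜ, f u * (adjMat E u v * f v)
              = ∑ v ∈ Sᶜ, (cu * (-σ)) * adjMat E u v :=
                Finset.sum_congr rfl (fun v hv => by
                  rw [hcu u hu]; simp only [hf, if_neg (Finset.mem_compl.mp hv)]; ring)
            _ = cu * (-σ) * ∑ v ∈ Sᶜ, adjMat E u v := (Finset.mul_sum _ _ _).symm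
      calc ∑ u ∈ X, ∑ v : Fin n, f u * (adjMat E u v * f v)
          = ∑ u ∈ X, (cu * τ * (∑ v ∈ S, adjMat E u v)
              + cu * (-σ) * (∑ v ∈ Sᶜ, adjMat E u v)) := Finset.sum_congr rfl inner
        _ = cu * τ * (∑ u ∈ X, ∑ v ∈ S, adjMat E u v)
              + cu * (-σ) * (∑ u ∈ X, ∑ v ∈ Sᶜ, adjMat E u v) := by
            rw [Finset.sum_add_distrib]
            congr 1
            · exact (Finset.mul_sum _ _ _).symm
            · exact (Finset.mul_sum _ _ _).symm
    have hT2 : f ⬝ᵥ (adjMat E) *ᵥ f = -(σ^2) * (σ + τ) := by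
      have expand : f ⬝ᵥ (adjMat E) *ᵥ f = ∑ u, ∑ v, f u * (adjMat E u v * f v) := by
        simp [dotProduct, mulVec, Finset.mul_sum]
      rw [expand,
        ← Finset.sum_add_sum_compl S (fun u => ∑ v : Fin n, f u * (adjMat E u v * f v)),
        blk S τ (fun u hu => by simp only [hf, if_pos hu]),
        blk Sᶜ (-σ) (fun u hu => by simp only [hf, if_neg (Finset.mem_compl.mp hu)]),
        hASS, hASSc, hAScS, hAScSc]
      ring
    have hLf : f ⬝ᵥ (lapMat E) *ᵥ f = σ * (σ + τ)^2 := by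
      unfold lapMat
      rw [Matrix.sub_mulVec, dotProduct_sub]
      have h1 : f ⬝ᵥ (Matrix.diagonal (fun v => (hdeg E v : ℝ))) *ᵥ f
          = ∑ v : Fin n, (hdeg E v : ℝ) * (f v)^2 := by
        simp only [dotProduct, mulVec_diagonal]
        apply Finset.sum_congr rfl
        intro v _
        ring
      rw [h1, hT1, hT2]
      ring
    have hpt : ∀ v : Fin n, (hdeg E v : ℝ) ^ (-(1/2) : ℝ) * x v = f v := by
      intro v
      have h0 : (0:ℝ) ≤ (hdeg E v : ℝ) := Nat.cast_nonneg _
      have hne : Real.sqrt (hdeg E v : ℝ) ≠ 0 := by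
        refine (Real.sqrt_ne_zero h0).mpr ?_
        have := hd1 v; linarith
      rw [Real.rpow_neg h0, ← Real.sqrt_eq_rpow]
      simp only [hx]
      field_simp
    have hDmx : (Matrix.diagonal (fun v => (hdeg E v : ℝ) ^ (-(1/2) : ℝ))) *ᵥ x = f := by
      ext v
      rw [Matrix.mulVec_diagonal]
      exact hpt v
    have hxMx : x ⬝ᵥ (normLap E) *ᵥ x = f ⬝ᵥ (lapMat E) *ᵥ f := by
      unfold normLap
      rw [← Matrix.mulVec_mulVec, ← Matrix.mulVec_mulVec, hDmx]
      simp only [dotProduct, mulVec_diagonal]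
      apply Finset.sum_congr rfl
      intro v _
      have h := hpt v
      calc x v * ((hdeg E v : ℝ) ^ (-(1/2) : ℝ) * ((lapMat E) *ᵥ f) v)
          = ((hdeg E v : ℝ) ^ (-(1/2) : ℝ) * x v) * ((lapMat E) *ᵥ f) v := by ring
        _ = f v * ((lapMat E) *ᵥ f) v := by rw [h]
    have hxx : x ⬝ᵥ x = σ * τ^2 + τ * σ^2 := by
      rw [← hT1]
      simp only [dotProduct, hx]
      apply Finset.sum_congr rfl
      intro v _
      have h0 : (0:ℝ) ≤ (hdeg E v : ℝ) := Nat.cast_nonneg _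
      have := Real.mul_self_sqrt h0
      nlinarith [Real.sq_sqrt h0]
    -- positivity facts
    have hαδ : (α:ℝ) * (δ:ℝ) ≤ σ := by
      have hb : ∀ v ∈ S, (δ:ℝ) ≤ (hdeg E v : ℝ) := fun v _ => by
        exact_mod_cast hδ.2 ⟨v, rfl⟩
      calc (α:ℝ) * δ = (S.card : ℝ) * δ := by rw [hScard]
        _ = ∑ _v ∈ S, (δ:ℝ) := by rw [Finset.sum_const, nsmul_eq_mul]
        _ ≤ σ := Finset.sum_le_sum hb
    have v0 : Fin n := ⟨0, hn⟩
    have hα1 : 1 ≤ α := by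
      apply hα.2
      refine ⟨{v0}, Finset.card_singleton v0, ?_⟩
      intro u hu v hv hne
      rw [Finset.mem_singleton] at hu hv
      exact absurd (hu.trans hv.symm) hne
    have hδ1 : 1 ≤ δ := by
      obtain ⟨v, hv⟩ := hδ.1
      have := hiso v
      omega
    have hσpos : 0 < σ := by
      have h1 : (1:ℝ) ≤ (α:ℝ) * (δ:ℝ) := by
        have : 1 * 1 ≤ α * δ := Nat.mul_le_mul hα1 hδ1
        exact_mod_cast this
      linarith
    have hSne : S ≠ Finset.univ := by
      intro hSu
      obtain ⟨e, he⟩ : (E.filter fun e => v0 ∈ e).Nonempty := Finset.card_pos.mp (hiso v0)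
      rw [Finset.mem_filter] at he
      obtain ⟨u, hu, w, hw, huw⟩ := Finset.one_lt_card.mp
        (by rw [hunif e he.1]; omega : 1 < e.card)
      have h0 := hSind u (by rw [hSu]; exact Finset.mem_univ u)
        w (by rw [hSu]; exact Finset.mem_univ w) huw
      unfold codeg at h0
      have hmem : e ∈ E.filter fun e' => u ∈ e' ∧ w ∈ e' :=
        Finset.mem_filter.mpr ⟨he.1, hu, hw⟩
      have := Finset.card_pos.mpr ⟨e, hmem⟩
      omega
    have hτpos : 0 < τ := by
      have hne : Sᶜ.Nonempty := by
        rw [Finset.nonempty_iff_ne_empty]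
        intro h
        apply hSne
        rwa [Finset.compl_eq_empty_iff] at h
      apply Finset.sum_pos (fun v _ => by have := hd1 v; linarith) hne
    have hVpos : 0 < σ + τ := by linarith
    -- Rayleigh
    have hray := rayleigh (normLap_herm E) x
    rw [hxMx, hLf, hxx] at hray
    have h1 : (σ + τ) / τ ≤ lamMax (normLap E) := by
      rw [div_le_iff₀ hτpos]
      nlinarith [mul_pos hσpos hVpos]
    have h2 : (k:ℝ) * (m:ℝ) / ((k:ℝ) * (m:ℝ) - (α:ℝ) * (δ:ℝ)) ≤ (σ + τ) / τ := by
      rw [← hV]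
      have hden : 0 < σ + τ - (α:ℝ) * (δ:ℝ) := by linarith
      apply div_le_div_of_nonneg_left (by linarith) hτpos
      linarith
    exact h2.trans h1
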